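/- arXiv:1006.5414 — 3 statements merged into one kernel-verified Lean document; each statement's English description precedes it below -/
import Mathlib

section
/- For every element g of G = GL₃(F₂), the number of elements of H₁ that are conjugate in G to g equals the number of elements of H₂ that are conjugate in G to g; that is, for every conjugacy class C of G one has #(C ∩ H₁) = #(C ∩ H₂), so (G, H₁, H₂) is a Gassmann–Sunada triple. -/
section Aux

private def tbl : List Nat := [0, 0, 0, 0, 0, 0, 0, 0, 0, 0, 0, 0, 0, 0, 0, 0, 0, 0, 0, 0, 0, 0, 0, 0, 0, 0, 0, 0, 0, 0, 0, 0, 0, 0, 0, 0, 0, 0, 0, 0, 0, 0, 0, 0, 0, 0, 0, 0, 0, 0, 0, 0, 0, 0, 0, 0, 0, 0, 0, 0, 0, 0, 0, 0, 0, 0, 0, 0, 0, 0, 0, 0, 0, 0, 0, 0, 0, 0, 0, 0, 0, 0, 0, 0, 84, 340, 485, 334, 0, 0, 0, 0, 426, 442, 500, 244, 0, 0, 84, 340, 0, 0, 84, 340, 0, 0, 500, 244, 0, 0, 500, 244, 0, 0, 84, 340, 426, 282, 0, 0, 0, 0, 485, 266, 500, 244, 0, 0, 0, 0, 0, 0, 0,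 0, 0, 0, 0, 0, 0, 0, 84, 244, 340, 500, 0, 0, 0, 0, 0, 0, 0, 0, 0, 0, 0, 0, 84, 500, 340, 244, 0, 161, 0, 334, 0, 334, 0, 485, 0, 500, 0, 244, 340, 0, 84, 0, 0, 417, 0, 335, 0, 267, 0, 229, 0, 244, 0, 500, 340, 0, 84, 0, 0, 0, 0, 0, 0, 0, 0, 0, 0, 0, 0, 0, 84, 426, 442, 340, 0, 0, 0, 0, 485, 500, 244, 494, 0, 0, 0, 0, 0, 0, 0, 0, 0, 500, 244, 0, 0, 500, 244, 0, 0, 340, 84, 0, 266, 0, 0, 161, 0, 282, 426, 0, 244, 0, 0, 500, 0, 340, 84, 0, 0, 340, 84, 0, 0, 0, 0, 0, 0, 0, 0, 0, 0, 0, 266, 282, 0, 0, 187, 94, 0, 84, 0, 266, 0, 84, 0, 334, 0, 266, 282, 0, 0, 161, 254, 0, 0, 0, 0, 0, 0, 0, 0, 0, 0, 0, 187, 442, 0, 0, 426, 254, 0, 161, 0, 84, 0, 187, 0, 84, 0, 426, 94, 0, 0, 161, 442, 0, 0, 0, 0, 0, 0, 0, 0, 0, 0, 0, 244, 500, 0,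 0, 244, 500, 0, 84, 0, 161, 340, 0, 494, 0, 0, 500, 426, 0, 244, 0, 0, 161, 0, 0, 340, 84, 0, 0, 340, 84, 0, 0, 0, 0, 0, 0, 0, 0, 0, 266, 340, 0, 442, 0, 0, 84, 0, 266, 0, 500, 282, 0, 244, 0, 0, 0, 0, 0, 0, 0, 0, 0, 0, 0, 244, 340, 500, 84, 0, 0, 0, 161, 0, 485, 0, 266, 0, 266, 0, 84, 500, 0, 244, 0, 0, 340, 0, 417, 0, 229, 0, 335, 0, 267, 0, 340, 500, 0, 244, 0, 0, 84, 0, 0, 0, 0, 0, 0, 0, 0, 0, 0, 244, 84, 500, 340, 0, 0, 0, 0, 0, 0, 0, 0, 0, 0, 0, 0, 340, 426, 485, 84, 0, 0, 0, 244, 0, 161, 334, 0, 500, 0, 0, 84, 340, 0, 0, 84, 340, 0, 0, 244, 500, 0, 0, 244, 500, 0, 0, 282, 0, 84, 340, 0, 266, 0, 0, 0, 442, 244, 500, 266, 0, 0, 0, 0, 0, 0, 0, 0, 0, 0]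

private def enc (a b c d e f g h i : Bool) : Nat :=
  a.toNat + 2*b.toNat + 4*c.toNat + 8*d.toNat + 16*e.toNat + 32*f.toNat +
    64*g.toNat + 128*h.toNat + 256*i.toNat

private def wt (a b c d e f g h i : Bool) (k : Nat) : Bool :=
  (tbl.getD (enc a b c d e f g h i) 0).testBit k

private def bdet (a b c d e f g h i : Bool) : Bool :=
  xor (xor (xor (xor (xor (a && e && i) (a && f && h)) (b && d && i)) (b && f && g)) (c && d && h)) (c && e && g)

set_option maxRecDepth 100000 in
private theorem boolKey : ∀ a b c d e f g h i : Bool,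
    bdet a b c d e f g h i = true →
      letI W := wt a b c d e f g h i
      bdet (W 0) (W 1) (W 2) (W 3) (W 4) (W 5) (W 6) (W 7) (W 8) = true ∧
      (xor (xor ((W 0) && a) ((W 1) && d)) ((W 2) && g) = xor (xor (a && (W 0)) (d && (W 3))) (g && (W 6))) ∧
      (xor (xor ((W 0) && b) ((W 1) && e)) ((W 2) && h) = xor (xor (a && (W 1)) (d && (W 4))) (g && (W 7))) ∧
      (xor (xor ((W 0) && c) ((W 1) && f)) ((W 2) && i) = xor (xor (a && (W 2)) (d && (W 5))) (g && (W 8))) ∧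
      (xor (xor ((W 3) && a) ((W 4) && d)) ((W 5) && g) = xor (xor (b && (W 0)) (e && (W 3))) (h && (W 6))) ∧
      (xor (xor ((W 3) && b) ((W 4) && e)) ((W 5) && h) = xor (xor (b && (W 1)) (e && (W 4))) (h && (W 7))) ∧
      (xor (xor ((W 3) && c) ((W 4) && f)) ((W 5) && i) = xor (xor (b && (W 2)) (e && (W 5))) (h && (W 8))) ∧
      (xor (xor ((W 6) && a) ((W 7) && d)) ((W 8) && g) = xor (xor (c && (W 0)) (f && (W 3))) (i && (W 6))) ∧
      (xor (xor ((W 6) && b) ((W 7) && e)) ((W 8) && h) = xor (xor (c && (W 1)) (f && (W 4))) (i && (W 7))) ∧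
      (xor (xor ((W 6) && c) ((W 7) && f)) ((W 8) && i) = xor (xor (c && (W 2)) (f && (W 5))) (i && (W 8))) := by
  decide

private def z (b : Bool) : ZMod 2 := cond b 1 0

private lemma z_add (a b : Bool) : z (xor a b) = z a + z b := by cases a <;> cases b <;> rfl
private lemma z_mul (a b : Bool) : z (a && b) = z a * z b := by cases a <;> cases b <;> rfl
private lemma z_surj (x : ZMod 2) : ∃ b, z b = x := by
  fin_cases x
  · exact ⟨false, rfl⟩
  · exact ⟨true, rfl⟩
private lemma z_inj : Function.Injective z := by intro a b; cases a <;> cases b <;> decide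

private lemma zdet (a b c d e f g h i : Bool) :
    z (bdet a b c d e f g h i) =
      z a * z e * z i - z a * z f * z h - z b * z d * z i + z b * z f * z g +
        z c * z d * z h - z c * z e * z g := by
  unfold bdet
  simp only [z_add, z_mul]
  have neg1 : ∀ y : ZMod 2, -y = y := by decide
  simp only [sub_eq_add_neg, neg1]

private lemma zeq6 {x1 y1 x2 y2 x3 y3 x4 y4 x5 y5 x6 y6 : Bool}
    (h : xor (xor (x1&&y1) (x2&&y2)) (x3&&y3) = xor (xor (x4&&y4) (x5&&y5)) (x6&&y6)) :
    z x1 * z y1 + z x2 * z y2 + z x3 * z y3 = z x4 * z y4 + z x5 * z y5 + z x6 * z y6 := by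
  have := congrArg z h
  simpa only [z_add, z_mul] using this

private theorem conj_transpose_exists (A : Matrix (Fin 3) (Fin 3) (ZMod 2)) (hA : A.det = 1) :
    ∃ B : Matrix (Fin 3) (Fin 3) (ZMod 2), B.det = 1 ∧ B * A = A.transpose * B := by
  obtain ⟨a, ha⟩ := z_surj (A 0 0)
  obtain ⟨b, hb⟩ := z_surj (A 0 1)
  obtain ⟨c, hc⟩ := z_surj (A 0 2)
  obtain ⟨d, hd⟩ := z_surj (A 1 0)
  obtain ⟨e, he⟩ := z_surj (A 1 1)
  obtain ⟨f, hf⟩ := z_surj (A 1 2)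
  obtain ⟨g, hg⟩ := z_surj (A 2 0)
  obtain ⟨h, hh⟩ := z_surj (A 2 1)
  obtain ⟨i, hi⟩ := z_surj (A 2 2)
  have hAeta : A = !![z a, z b, z c; z d, z e, z f; z g, z h, z i] := by
    rw [ha, hb, hc, hd, he, hf, hg, hh, hi]
    exact Matrix.eta_fin_three A
  have hT : A.transpose = !![z a, z d, z g; z b, z e, z h; z c, z f, z i] := by
    rw [hAeta]
    ext x y
    fin_cases x <;> fin_cases y <;> rfl
  rw [hAeta, Matrix.det_fin_three] at hA
  simp at hA
  have hbd : bdet a b c d e f g h i = true := by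
    apply z_inj
    rw [zdet]
    have h1 : z true = 1 := rfl
    rw [h1]
    linear_combination hA
  obtain ⟨h0, e1, e2, e3, e4, e5, e6, e7, e8, e9⟩ := boolKey a b c d e f g h i hbd
  set W := wt a b c d e f g h i with hW
  refine ⟨!![z (W 0), z (W 1), z (W 2); z (W 3), z (W 4), z (W 5); z (W 6), z (W 7), z (W 8)],
    ?_, ?_⟩
  · have hz : z (bdet (W 0) (W 1) (W 2) (W 3) (W 4) (W 5) (W 6) (W 7) (W 8)) = 1 := by
      rw [h0]; rfl
    rw [zdet] at hz
    rw [Matrix.det_fin_three]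
    simp
    linear_combination hz
  · rw [hT, hAeta, Matrix.mul_fin_three, Matrix.mul_fin_three]
    refine congrArg Matrix.of ?_
    refine Matrix.vec3_eq ?_ ?_ ?_ <;> refine Matrix.vec3_eq ?_ ?_ ?_ <;>
      first
        | exact zeq6 e1 | exact zeq6 e2 | exact zeq6 e3
        | exact zeq6 e4 | exact zeq6 e5 | exact zeq6 e6
        | exact zeq6 e7 | exact zeq6 e8 | exact zeq6 e9

/-- transpose on GL -/
private def transGL (g : GL (Fin 3) (ZMod 2)) : GL (Fin 3) (ZMod 2) where
  val := (g : Matrix (Fin 3) (Fin 3) (ZMod 2)).transpose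
  inv := ((g⁻¹ : GL (Fin 3) (ZMod 2)) : Matrix (Fin 3) (Fin 3) (ZMod 2)).transpose
  val_inv := by rw [← Matrix.transpose_mul, g.inv_mul, Matrix.transpose_one]
  inv_val := by rw [← Matrix.transpose_mul, g.mul_inv, Matrix.transpose_one]

private lemma transGL_invol (g : GL (Fin 3) (ZMod 2)) : transGL (transGL g) = g :=
  Units.ext (Matrix.transpose_transpose _)

private lemma transGL_inj : Function.Injective transGL :=
  Function.LeftInverse.injective transGL_invol

private lemma isConj_transGL (g : GL (Fin 3) (ZMod 2)) : IsConj g (transGL g) := by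
  have hdet : ((g : Matrix (Fin 3) (Fin 3) (ZMod 2))).det = 1 := by
    have hu : IsUnit ((g : Matrix (Fin 3) (Fin 3) (ZMod 2))).det :=
      (Matrix.isUnit_iff_isUnit_det _).1 g.isUnit
    have : ∀ x : ZMod 2, IsUnit x → x = 1 := by decide
    exact this _ hu
  obtain ⟨B, hB1, hBA⟩ := conj_transpose_exists (g : Matrix (Fin 3) (Fin 3) (ZMod 2)) hdet
  have hBu : IsUnit B := (Matrix.isUnit_iff_isUnit_det B).2 (by rw [hB1]; exact isUnit_one)
  obtain ⟨u, hu⟩ := hBu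
  rw [isConj_iff]
  refine ⟨u, ?_⟩
  have h1 : u * g = transGL g * u := Units.ext (by
    show (u : Matrix (Fin 3) (Fin 3) (ZMod 2)) * g
      = (transGL g : Matrix (Fin 3) (Fin 3) (ZMod 2)) * u
    rw [hu]
    exact hBA)
  rw [h1, mul_assoc, mul_inv_cancel, mul_one]

private lemma transGL_mul (a b : GL (Fin 3) (ZMod 2)) :
    transGL (a * b) = transGL b * transGL a :=
  Units.ext (Matrix.transpose_mul _ _)

private lemma transGL_inv (c : GL (Fin 3) (ZMod 2)) : transGL c⁻¹ = (transGL c)⁻¹ :=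
  Units.ext rfl

private lemma transGL_conj {g h : GL (Fin 3) (ZMod 2)} (hcj : IsConj g h) :
    IsConj (transGL g) (transGL h) := by
  obtain ⟨c, hc⟩ := isConj_iff.1 hcj
  rw [isConj_iff]
  refine ⟨(transGL c)⁻¹, ?_⟩
  rw [← hc, transGL_mul, transGL_mul, transGL_inv, inv_inv]
  group

private lemma isConj_iff_transGL (g h : GL (Fin 3) (ZMod 2)) :
    IsConj g h ↔ IsConj g (transGL h) :=
  ⟨fun hx => hx.trans (isConj_transGL h),
   fun hx => hx.trans (IsConj.symm (isConj_transGL h))⟩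

end Aux



/-- `H₁`: the subgroup of `G = GL₃(𝔽₂)` of matrices whose first row is `(1,0,0)`. -/
def H1 : Subgroup (GL (Fin 3) (ZMod 2)) where
  carrier := {M | (M : Matrix (Fin 3) (Fin 3) (ZMod 2)) 0 = ![1, 0, 0]}
  one_mem' := by
    show ((1 : GL (Fin 3) (ZMod 2)) : Matrix (Fin 3) (Fin 3) (ZMod 2)) 0 = ![1, 0, 0]
    funext j; fin_cases j <;> simp [Matrix.one_apply]
  mul_mem' := by
    intro M N hM hN
    simp only [Set.mem_setOf_eq] at hM hN
    show ((M * N : GL (Fin 3) (ZMod 2)) : Matrix (Fin 3) (Fin 3) (ZMod 2)) 0 = ![1, 0, 0]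
    have h : ((M * N : GL (Fin 3) (ZMod 2)) : Matrix (Fin 3) (Fin 3) (ZMod 2)) =
        (M : Matrix (Fin 3) (Fin 3) (ZMod 2)) * (N : Matrix (Fin 3) (Fin 3) (ZMod 2)) := rfl
    rw [h]
    funext j
    simp only [Matrix.mul_apply]
    rw [Fin.sum_univ_three]
    simp [hM, hN]
  inv_mem' := by
    intro M hM
    simp only [Set.mem_setOf_eq] at hM
    have hrow : ∀ (N : Matrix (Fin 3) (Fin 3) (ZMod 2)), N 0 = Matrix.vecMul ![1,0,0] N := by
      intro N; funext j; simp [Matrix.vecMul, dotProduct, Fin.sum_univ_three]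
    have e1M : Matrix.vecMul ![1,0,0] (M : Matrix (Fin 3) (Fin 3) (ZMod 2)) = ![1,0,0] := by
      rw [← hrow, hM]
    show ((M⁻¹ : GL (Fin 3) (ZMod 2)) : Matrix (Fin 3) (Fin 3) (ZMod 2)) 0 = ![1, 0, 0]
    rw [hrow ((M⁻¹ : GL (Fin 3) (ZMod 2)) : Matrix (Fin 3) (Fin 3) (ZMod 2))]
    calc Matrix.vecMul ![1,0,0] ((M⁻¹ : GL (Fin 3) (ZMod 2)) : Matrix (Fin 3) (Fin 3) (ZMod 2))
        = Matrix.vecMul (Matrix.vecMul ![1,0,0] (M : Matrix (Fin 3) (Fin 3) (ZMod 2)))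
          ((M⁻¹ : GL (Fin 3) (ZMod 2)) : Matrix (Fin 3) (Fin 3) (ZMod 2)) := by rw [e1M]
      _ = Matrix.vecMul ![1,0,0] ((M : Matrix (Fin 3) (Fin 3) (ZMod 2)) *
          ((M⁻¹ : GL (Fin 3) (ZMod 2)) : Matrix (Fin 3) (Fin 3) (ZMod 2))) := by
            rw [Matrix.vecMul_vecMul]
      _ = Matrix.vecMul ![1,0,0] (1 : Matrix (Fin 3) (Fin 3) (ZMod 2)) := by rw [M.mul_inv]
      _ = ![1,0,0] := by rw [← hrow]; funext j; fin_cases j <;> simp [Matrix.one_apply]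

/-- `H₂`: the subgroup of `G = GL₃(𝔽₂)` of matrices whose first column is `(1,0,0)ᵀ`. -/
def H2 : Subgroup (GL (Fin 3) (ZMod 2)) where
  carrier := {M | (fun i => (M : Matrix (Fin 3) (Fin 3) (ZMod 2)) i 0) = ![1, 0, 0]}
  one_mem' := by
    funext i; fin_cases i <;> simp [Matrix.one_apply]
  mul_mem' := by
    intro M N hM hN
    simp only [Set.mem_setOf_eq] at hM hN
    have hM' : ∀ k, (M : Matrix (Fin 3) (Fin 3) (ZMod 2)) k 0 = ![1,0,0] k :=
      fun k => congrFun hM k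
    have hN' : ∀ k, (N : Matrix (Fin 3) (Fin 3) (ZMod 2)) k 0 = ![1,0,0] k :=
      fun k => congrFun hN k
    show (fun i => ((M : Matrix (Fin 3) (Fin 3) (ZMod 2)) *
      (N : Matrix (Fin 3) (Fin 3) (ZMod 2))) i 0) = ![1, 0, 0]
    funext i
    simp only [Matrix.mul_apply]
    rw [Fin.sum_univ_three, hN' 0, hN' 1, hN' 2]
    simp [hM' i]
  inv_mem' := by
    intro M hM
    simp only [Set.mem_setOf_eq] at hM
    have hcol : ∀ (N : Matrix (Fin 3) (Fin 3) (ZMod 2)),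
        (fun i => N i 0) = N.mulVec ![1,0,0] := by
      intro N; funext i; simp [Matrix.mulVec, dotProduct, Fin.sum_univ_three]
    have e1M : (M : Matrix (Fin 3) (Fin 3) (ZMod 2)).mulVec ![1,0,0] = ![1,0,0] := by
      rw [← hcol, hM]
    show (fun i => ((M⁻¹ : GL (Fin 3) (ZMod 2)) : Matrix (Fin 3) (Fin 3) (ZMod 2)) i 0)
      = ![1, 0, 0]
    rw [hcol ((M⁻¹ : GL (Fin 3) (ZMod 2)) : Matrix (Fin 3) (Fin 3) (ZMod 2))]
    calc ((M⁻¹ : GL (Fin 3) (ZMod 2)) : Matrix (Fin 3) (Fin 3) (ZMod 2)).mulVec ![1,0,0]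
        = ((M⁻¹ : GL (Fin 3) (ZMod 2)) : Matrix (Fin 3) (Fin 3) (ZMod 2)).mulVec
          ((M : Matrix (Fin 3) (Fin 3) (ZMod 2)).mulVec ![1,0,0]) := by rw [e1M]
      _ = (((M⁻¹ : GL (Fin 3) (ZMod 2)) : Matrix (Fin 3) (Fin 3) (ZMod 2)) *
          (M : Matrix (Fin 3) (Fin 3) (ZMod 2))).mulVec ![1,0,0] := by
            rw [Matrix.mulVec_mulVec]
      _ = (1 : Matrix (Fin 3) (Fin 3) (ZMod 2)).mulVec ![1,0,0] := by rw [M.inv_mul]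
      _ = ![1,0,0] := by
            rw [← hcol]; funext i; fin_cases i <;> simp [Matrix.one_apply]

/-- For every element `g` of `G = GL₃(𝔽₂)`, the number of elements of `H₁` conjugate in `G`
to `g` equals the number of elements of `H₂` conjugate in `G` to `g`; i.e. for every
conjugacy class `C` of `G` one has `#(C ∩ H₁) = #(C ∩ H₂)`, so `(G, H₁, H₂)` is a
Gassmann–Sunada triple. -/
theorem gassmann_sunada_triple (g : GL (Fin 3) (ZMod 2)) :
    Set.ncard {h : GL (Fin 3) (ZMod 2) | h ∈ H1 ∧ IsConj g h} =
    Set.ncard {h : GL (Fin 3) (ZMod 2) | h ∈ H2 ∧ IsConj g h} := by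
  have himg : {h : GL (Fin 3) (ZMod 2) | h ∈ H2 ∧ IsConj g h} =
      transGL '' {h : GL (Fin 3) (ZMod 2) | h ∈ H1 ∧ IsConj g h} := by
    ext h
    constructor
    · rintro ⟨hH2, hconj⟩
      refine ⟨transGL h, ⟨?_, ?_⟩, transGL_invol h⟩
      · -- transGL h ∈ H1
        show ((transGL h : GL (Fin 3) (ZMod 2)) : Matrix (Fin 3) (Fin 3) (ZMod 2)) 0 = ![1,0,0]
        have : (fun i => (h : Matrix (Fin 3) (Fin 3) (ZMod 2)) i 0) = ![1,0,0] := hH2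
        funext j
        exact congrFun this j
      · exact (isConj_iff_transGL g h).1 hconj
    · rintro ⟨k, ⟨hH1, hconj⟩, rfl⟩
      refine ⟨?_, (isConj_iff_transGL g k).1 hconj⟩
      show (fun i => ((transGL k : GL (Fin 3) (ZMod 2)) : Matrix (Fin 3) (Fin 3) (ZMod 2)) i 0)
        = ![1,0,0]
      have : (k : Matrix (Fin 3) (Fin 3) (ZMod 2)) 0 = ![1,0,0] := hH1
      funext i
      exact congrFun this i
  rw [himg, Set.ncard_image_of_injective _ transGL_inj]
end

section
/- The subgroups H₁ and H₂ of G = GL₃(F₂) are not conjugate: there is no g ∈ G with g H₁ g⁻¹ = H₂. (Hence the Gassmann–Sunada triple (G, H₁, H₂) is non-trivial.) -/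
/-- Build a `GL` element from an involutive matrix. -/
def mkGL (A : Matrix (Fin 3) (Fin 3) (ZMod 2)) (h : A * A = 1) : GL (Fin 3) (ZMod 2) :=
  ⟨A, A, h, h⟩

def hA : GL (Fin 3) (ZMod 2) := mkGL ![![1,0,0],![1,1,0],![0,0,1]] (by decide)
def hB : GL (Fin 3) (ZMod 2) := mkGL ![![1,0,0],![0,0,1],![0,1,0]] (by decide)
def hC : GL (Fin 3) (ZMod 2) := mkGL ![![1,0,0],![0,1,1],![0,0,1]] (by decide)

lemma hA_mem : hA ∈ H1 := by
  show ((hA : GL (Fin 3) (ZMod 2)) : Matrix (Fin 3) (Fin 3) (ZMod 2)) 0 = ![1,0,0]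
  rfl

lemma hB_mem : hB ∈ H1 := by
  show ((hB : GL (Fin 3) (ZMod 2)) : Matrix (Fin 3) (Fin 3) (ZMod 2)) 0 = ![1,0,0]
  rfl

lemma hC_mem : hC ∈ H1 := by
  show ((hC : GL (Fin 3) (ZMod 2)) : Matrix (Fin 3) (Fin 3) (ZMod 2)) 0 = ![1,0,0]
  rfl

/-- The subgroups `H₁` and `H₂` of `G = GL₃(𝔽₂)` are not conjugate: there is no `g ∈ G`
with `g H₁ g⁻¹ = H₂`. (Hence the Gassmann–Sunada triple `(G, H₁, H₂)` is non-trivial.) -/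
theorem H1_H2_not_conjugate :
    ¬ ∃ g : GL (Fin 3) (ZMod 2),
      Subgroup.map (MulAut.conj g).toMonoidHom H1 = H2 := by
  rintro ⟨g, hg⟩
  set A : Matrix (Fin 3) (Fin 3) (ZMod 2) := (g : Matrix (Fin 3) (Fin 3) (ZMod 2)) with hAdef
  set B : Matrix (Fin 3) (Fin 3) (ZMod 2) := ((g⁻¹ : GL (Fin 3) (ZMod 2)) : Matrix (Fin 3) (Fin 3) (ZMod 2)) with hBdef
  have hBA : B * A = 1 := g.inv_mul
  set v : Fin 3 → ZMod 2 := B.mulVec ![1,0,0] with hv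
  have key : ∀ h ∈ H1, (h : Matrix (Fin 3) (Fin 3) (ZMod 2)).mulVec v = v := by
    intro h hh
    have hmem : (MulAut.conj g) h ∈ H2 := by
      rw [← hg]; exact ⟨h, hh, rfl⟩
    have hmem' : (fun i => (((MulAut.conj g) h : GL (Fin 3) (ZMod 2)) :
        Matrix (Fin 3) (Fin 3) (ZMod 2)) i 0) = ![1,0,0] := hmem
    have hcol : (((MulAut.conj g) h : GL (Fin 3) (ZMod 2)) :
        Matrix (Fin 3) (Fin 3) (ZMod 2)).mulVec ![1,0,0] = ![1,0,0] := by
      funext i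
      have := congrFun hmem' i
      simpa [Matrix.mulVec, dotProduct, Fin.sum_univ_three] using this
    have hval : (((MulAut.conj g) h : GL (Fin 3) (ZMod 2)) :
        Matrix (Fin 3) (Fin 3) (ZMod 2)) = A * (h : Matrix (Fin 3) (Fin 3) (ZMod 2)) * B := rfl
    rw [hval] at hcol
    have := congrArg (fun w => B.mulVec w) hcol
    simp only [Matrix.mulVec_mulVec, ← Matrix.mul_assoc, hBA, Matrix.one_mul] at this
    rw [← Matrix.mulVec_mulVec, ← hv] at this
    exact this
  have kA := key hA hA_mem
  have kB := key hB hB_mem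
  have kC := key hC hC_mem
  have eA := congrFun kA 1
  have eB := congrFun kB 1
  have eC := congrFun kC 1
  simp only [hA, hB, hC, mkGL, Matrix.mulVec, dotProduct, Fin.sum_univ_three] at eA eB eC
  norm_num [Matrix.cons_val_two, Matrix.tail_cons, Matrix.head_cons] at eA eB eC
  -- eA : v 0 = 0, eB : v 2 = v 1, eC : v 2 = 0
  have h1 : v 1 = 0 := by rw [← eB, eC]
  have hzero : v = 0 := by
    funext i; fin_cases i <;> simp [eA, h1, eC]
  have hAv : A.mulVec v = ![1,0,0] := by
    rw [hv, Matrix.mulVec_mulVec, g.mul_inv, Matrix.one_mulVec]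
  rw [hzero, Matrix.mulVec_zero] at hAv
  have := congrFun hAv 0
  simp at this
end

section
/- Let G be a finitely generated group and m : G → ℝ≥0 a function whose image is a closed and discrete subset of ℝ (equivalently, m takes only finitely many values below any given bound). Then the jump set Jump(Fil^•_m G) of the induced filtration is a finite set, and every jump value lies in the image of m. -/
/-- The filtration of a group `G` induced by a class function / length function
`m : G → ℝ≥0`: at level `δ`, the subgroup generated by all elements of `m`-value
less than `δ`. -/
def filSubgroup {G : Type*} [Group G] (m : G → NNReal) (δ : ℝ) : Subgroup G :=
  Subgroup.closure {g : G | (m g : ℝ) < δ}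

/-- The jump set of the induced filtration: the set of `δ > 0` such that
`Fil^δ_m G ≠ Fil^{δ'}_m G` for every `δ' > δ`. -/
def jumpSet {G : Type*} [Group G] (m : G → NNReal) : Set ℝ :=
  {δ : ℝ | 0 < δ ∧ ∀ δ' : ℝ, δ < δ' → filSubgroup m δ ≠ filSubgroup m δ'}

/-- Let `G` be a finitely generated group and `m : G → ℝ≥0` a function whose image is a
closed and discrete subset of `ℝ`. Then the jump set of the induced filtration is finite,
and every jump value lies in the image of `m`. -/
theorem jumpSet_finite_and_subset_range {G : Type*} [Group G] (hfg : Group.FG G)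
    (m : G → NNReal)
    (hclosed : IsClosed {x : ℝ | ∃ g : G, (m g : ℝ) = x})
    (hdiscrete : DiscreteTopology {x : ℝ | ∃ g : G, (m g : ℝ) = x}) :
    (jumpSet m).Finite ∧ ∀ δ ∈ jumpSet m, ∃ g : G, (m g : ℝ) = δ := by
  classical
  set T : Set ℝ := {x : ℝ | ∃ g : G, (m g : ℝ) = x} with hT
  -- every jump is in the image of m
  have memT : ∀ δ ∈ jumpSet m, δ ∈ T := by
    intro δ hδ
    by_contra hδT
    obtain ⟨ε, hε, hball⟩ := Metric.isOpen_iff.mp hclosed.isOpen_compl δ hδT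
    have heq : filSubgroup m δ = filSubgroup m (δ + ε) := by
      unfold filSubgroup
      congr 1
      ext g
      simp only [Set.mem_setOf_eq]
      constructor
      · intro h; linarith
      · intro h
        by_contra h'
        push_neg at h'
        have hmem : (m g : ℝ) ∈ Metric.ball δ ε := by
          rw [Real.ball_eq_Ioo]
          exact ⟨by linarith, h⟩
        exact hball hmem ⟨g, rfl⟩
    exact hδ.2 (δ + ε) (by linarith) heq
  -- a bound above which the filtration is ⊤
  obtain ⟨F, hF⟩ := hfg.out
  set B : ℝ := ((F.sup m : NNReal) : ℝ) with hB
  have htop : ∀ δ : ℝ, B < δ → filSubgroup m δ = ⊤ := by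
    intro δ hδ
    rw [eq_top_iff, ← hF]
    apply Subgroup.closure_mono
    intro g hg
    have : (m g : ℝ) ≤ B := by exact_mod_cast Finset.le_sup (f := m) hg
    exact lt_of_le_of_lt this hδ
  have hsub : jumpSet m ⊆ T ∩ Set.Icc 0 B := by
    intro δ hδ
    refine ⟨memT δ hδ, hδ.1.le, ?_⟩
    by_contra h
    push_neg at h
    exact hδ.2 (δ + 1) (by linarith)
      (by rw [htop δ h, htop (δ + 1) (by linarith)])
  have hcomp : IsCompact (T ∩ Set.Icc 0 B) := isCompact_Icc.inter_left hclosed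
  have hdisc : DiscreteTopology ↥(T ∩ Set.Icc 0 B) :=
    DiscreteTopology.of_subset hdiscrete Set.inter_subset_left
  exact ⟨(hcomp.finite (isDiscrete_iff_discreteTopology.mpr hdisc)).subset hsub, memT⟩
end
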